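/- Let x_1 ≤ ... ≤ x_N be sorted reals, let M be an integer with 0 < 2M < N, set a = x_{M}, b = x_{N-M} (taking a = x_1 if M chosen appropriately), and define the clip function φ_{a,b}(x) = b if x > b, x if a ≤ x ≤ b, and a if x < a. Then the difference between the clipped mean (1/N)·Σ_{i=1}^N φ_{a,b}(x_i) and the trimmed mean (1/(N-2M))·Σ_{i=M+1}^{N-M} x_i is bounded in absolute value by (M/N)·|a + b - 2·TrMean| + (M/N)·(b - a), where TrMean denotes the trimmed mean. -/

import Mathlib

noncomputable def clip (a b x : ℝ) : ℝ :=
  if x > b then b else if x < a then a else x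

theorem winsorized_vs_trimmed
    (N M : ℕ) (x : ℕ → ℝ)
    (hsorted : ∀ i j, 1 ≤ i → i ≤ j → j ≤ N → x i ≤ x j)
    (hM0 : 0 < M) (hM : 2 * M < N)
    (a b TrMean : ℝ) (ha : a = x (M + 1)) (hb : b = x (N - M))
    (hTr : TrMean = (1 / ((N : ℝ) - 2 * M)) * ∑ i ∈ Finset.Icc (M + 1) (N - M), x i) :
    |(1 / (N : ℝ)) * ∑ i ∈ Finset.Icc 1 N, clip a b (x i) - TrMean| ≤
      ((M : ℝ) / N) * |a + b - 2 * TrMean| + ((M : ℝ) / N) * (b - a) := by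
  have hab : a ≤ b := by
    rw [ha, hb]; exact hsorted (M+1) (N-M) (by omega) (by omega) (by omega)
  have hN0 : (0:ℝ) < N := by
    have : 0 < N := by omega
    exact_mod_cast this
  have h1 : ∀ i ∈ Finset.Ioc 0 M, clip a b (x i) = a := by
    intro i hi
    simp only [Finset.mem_Ioc] at hi
    have hxa : x i ≤ a := ha ▸ hsorted i (M+1) hi.1 (by omega) (by omega)
    unfold clip
    rcases lt_or_eq_of_le hxa with h | h
    · rw [if_neg (by linarith), if_pos h]
    · rw [if_neg (by linarith), if_neg (by linarith), h]
  have h2 : ∀ i ∈ Finset.Ioc M (N - M), clip a b (x i) = x i := by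
    intro i hi
    simp only [Finset.mem_Ioc] at hi
    have hxa : a ≤ x i := ha ▸ hsorted (M+1) i (by omega) (by omega) (by omega)
    have hxb : x i ≤ b := hb ▸ hsorted i (N-M) (by omega) hi.2 (by omega)
    unfold clip
    rw [if_neg (by linarith), if_neg (by linarith)]
  have h3 : ∀ i ∈ Finset.Ioc (N - M) N, clip a b (x i) = b := by
    intro i hi
    simp only [Finset.mem_Ioc] at hi
    have hxb : b ≤ x i := hb ▸ hsorted (N-M) i (by omega) (by omega) hi.2
    unfold clip
    rcases lt_or_eq_of_le hxb with h | h
    · rw [if_pos h]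
    · rw [if_neg (by linarith), if_neg (by linarith), h]
  have hsplit : ∑ i ∈ Finset.Icc 1 N, clip a b (x i)
      = M * a + (∑ i ∈ Finset.Icc (M + 1) (N - M), x i) + M * b := by
    have e0 : Finset.Icc 1 N = Finset.Ioc 0 N := (Finset.Icc_add_one_left_eq_Ioc 0 N)
    have e2 : Finset.Icc (M + 1) (N - M) = Finset.Ioc M (N - M) :=
      Finset.Icc_add_one_left_eq_Ioc M (N - M)
    rw [e0, e2,
      ← Finset.sum_Ioc_consecutive _ (Nat.zero_le (N - M)) (by omega : N - M ≤ N),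
      ← Finset.sum_Ioc_consecutive _ (Nat.zero_le M) (by omega : M ≤ N - M)]
    rw [Finset.sum_congr rfl h1, Finset.sum_congr rfl h2, Finset.sum_congr rfl h3,
      Finset.sum_const, Finset.sum_const, Nat.card_Ioc, Nat.card_Ioc]
    have : N - (N - M) = M := by omega
    rw [this, Nat.sub_zero, nsmul_eq_mul, nsmul_eq_mul]
  rw [hsplit]
  have hT0 : (N : ℝ) - 2 * M ≠ 0 := by
    have : (2 * M : ℝ) < N := by exact_mod_cast hM
    linarith
  have key : (1 / (N : ℝ)) * ((M : ℝ) * a + (∑ i ∈ Finset.Icc (M + 1) (N - M), x i) + M * b)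
      - TrMean = ((M : ℝ) / N) * (a + b - 2 * TrMean) := by
    have hS : (∑ i ∈ Finset.Icc (M + 1) (N - M), x i) = ((N : ℝ) - 2 * M) * TrMean := by
      rw [hTr]; field_simp
    rw [hS]; field_simp; ring
  rw [key, abs_mul, abs_of_nonneg (by positivity : (0:ℝ) ≤ (M:ℝ)/N)]
  have : (0:ℝ) ≤ ((M : ℝ) / N) * (b - a) := by
    apply mul_nonneg (by positivity); linarith
  linarith
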